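/- The Coxeter graph Γ is a tightly fastened {C_7}_{P_3}-UH graph: for every 7-cycle C₀ of Γ and every 2-path M₀ (path on 3 vertices) contained in C₀, there exists exactly one 7-cycle C₁ ≠ C₀ of Γ such that the intersection of C₀ and C₁ (both on vertex sets and on edge sets) is exactly M₀. -/

import Mathlib

/-- Vertex set of the Coxeter graph: four concentric 7-tuples `u, v, t, z`. -/
abbrev CoxeterVertex := Fin 4 × ZMod 7

/-- Base (asymmetric) adjacency relation for the Coxeter graph:
`u_x ~ u_{x+1}`, `v_x ~ v_{x+2}`, `t_x ~ t_{x+3}`, and `z_x ~ u_x, v_x, t_x`. -/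
def coxeterRel : CoxeterVertex → CoxeterVertex → Prop := fun p q =>
  (p.1 = 0 ∧ q.1 = 0 ∧ q.2 = p.2 + 1) ∨
  (p.1 = 1 ∧ q.1 = 1 ∧ q.2 = p.2 + 2) ∨
  (p.1 = 2 ∧ q.1 = 2 ∧ q.2 = p.2 + 3) ∨
  (p.1 = 3 ∧ (q.1 = 0 ∨ q.1 = 1 ∨ q.1 = 2) ∧ q.2 = p.2)

/-- The Coxeter graph on 28 vertices. -/
def coxeterGraph : SimpleGraph CoxeterVertex := SimpleGraph.fromRel coxeterRel

/-- A 7-cycle of a graph `G` is a subgraph of `G` isomorphic to the cycle graph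
on 7 vertices. -/
def IsSevenCycle {V : Type*} {G : SimpleGraph V} (H : G.Subgraph) : Prop :=
  Nonempty (H.coe ≃g SimpleGraph.cycleGraph 7)

/-- The path subgraph `u – v – w` determined by two incident edges. -/
def twoPathSubgraph {V : Type*} {G : SimpleGraph V} {u v w : V}
    (h₁ : G.Adj u v) (h₂ : G.Adj v w) : G.Subgraph :=
  G.subgraphOfAdj h₁ ⊔ G.subgraphOfAdj h₂

/- ### Auxiliary setup -/

open SimpleGraph

/-- Boolean version of `coxeterRel`. -/
def relB : CoxeterVertex → CoxeterVertex → Bool := fun p q =>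
  (p.1 == 0 && q.1 == 0 && q.2 == p.2 + 1) ||
  (p.1 == 1 && q.1 == 1 && q.2 == p.2 + 2) ||
  (p.1 == 2 && q.1 == 2 && q.2 == p.2 + 3) ||
  (p.1 == 3 && (q.1 == 0 || q.1 == 1 || q.1 == 2) && q.2 == p.2)

/-- Boolean adjacency for the Coxeter graph. -/
def adjB : CoxeterVertex → CoxeterVertex → Bool := fun p q =>
  !(p == q) && (relB p q || relB q p)

def vertL : List CoxeterVertex :=
  (List.finRange 4).flatMap fun a => (List.finRange 7).map fun x => (a, (x : ZMod 7))

/-- `a – b` is an edge of the closed `7`-tuple `f`. -/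
def edgeIn (f : Fin 7 → CoxeterVertex) (a b : CoxeterVertex) : Prop :=
  ∃ i : Fin 7, (a = f i ∧ b = f (i+1)) ∨ (b = f i ∧ a = f (i+1))

def memIn (f : Fin 7 → CoxeterVertex) (a : CoxeterVertex) : Prop := ∃ i : Fin 7, a = f i

def isCycleTuple (f : Fin 7 → CoxeterVertex) : Prop :=
  Function.Injective f ∧ ∀ i : Fin 7, coxeterGraph.Adj (f i) (f (i+1))

/-- The subgraph of the Coxeter graph spanned by a closed 7-tuple. -/
def cycSG (f : Fin 7 → CoxeterVertex) : coxeterGraph.Subgraph where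
  verts := Set.range f
  Adj a b := coxeterGraph.Adj a b ∧ edgeIn f a b
  adj_sub h := h.1
  edge_vert h := by
    obtain ⟨-, i, hi | hi⟩ := h
    · exact ⟨i, hi.1.symm⟩
    · exact ⟨i+1, hi.2.symm⟩
  symm := ⟨fun a b h => by
    obtain ⟨hG, i, hi | hi⟩ := h
    · exact ⟨hG.symm, i, Or.inr hi⟩
    · exact ⟨hG.symm, i, Or.inl hi⟩⟩

lemma cycSG_adj {f : Fin 7 → CoxeterVertex} {a b : CoxeterVertex} :
    (cycSG f).Adj a b ↔ coxeterGraph.Adj a b ∧ edgeIn f a b := Iff.rfl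

lemma cycSG_verts {f : Fin 7 → CoxeterVertex} : (cycSG f).verts = Set.range f := rfl

/-- rotation/reflection of a tuple -/
def T (t : Fin 7 → CoxeterVertex) (s : Fin 7) (r : Bool) : Fin 7 → CoxeterVertex :=
  fun i => t (s + (if r then -i else i))


def memB (g : Fin 7 → CoxeterVertex) (a : CoxeterVertex) : Bool :=
  (List.finRange 7).any fun i => a == g i

def edgeB (g : Fin 7 → CoxeterVertex) (a b : CoxeterVertex) : Bool :=
  (List.finRange 7).any fun i => (a == g i && b == g (i+1)) || (b == g i && a == g (i+1))

def icond (t g : Fin 7 → CoxeterVertex) (u v w : CoxeterVertex) : Prop :=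
  (∀ i : Fin 7, memIn g (t i) ↔ (t i = u ∨ t i = v ∨ t i = w)) ∧
  (∀ i : Fin 7, edgeIn g (t i) (t (i+1)) ↔
    ((t i = u ∧ t (i+1) = v) ∨ (t i = v ∧ t (i+1) = u) ∨
     (t i = v ∧ t (i+1) = w) ∨ (t i = w ∧ t (i+1) = v)))

def icondB (t g : Fin 7 → CoxeterVertex) (u v w : CoxeterVertex) : Bool :=
  ((List.finRange 7).all fun i =>
     memB g (t i) == (t i == u || t i == v || t i == w)) &&
  ((List.finRange 7).all fun i =>
     edgeB g (t i) (t (i+1)) ==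
       ((t i == u && t (i+1) == v) || (t i == v && t (i+1) == u) ||
        (t i == v && t (i+1) == w) || (t i == w && t (i+1) == v)))

def eqCondB (g g' : Fin 7 → CoxeterVertex) : Bool :=
  ((List.finRange 7).all fun i => edgeB g' (g i) (g (i+1))) &&
  ((List.finRange 7).all fun i => edgeB g (g' i) (g' (i+1)))

def tupEqB (t : Fin 7 → CoxeterVertex) (s : Fin 7) (r : Bool)
    (v0 v1 v2 v3 v4 v5 v6 : CoxeterVertex) : Bool :=
  v0 == T t s r 0 && v1 == T t s r 1 && v2 == T t s r 2 && v3 == T t s r 3 &&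
  v4 == T t s r 4 && v5 == T t s r 5 && v6 == T t s r 6

def okB (t : Fin 7 → CoxeterVertex) : Bool :=
  (List.finRange 7).all fun i =>
    ((List.finRange 7).all fun k => !(t i == t k) || (i == k)) && adjB (t i) (t (i+1))

/- ### Bridging lemmas between `Bool` and `Prop` versions -/

lemma adjB_iff {p q : CoxeterVertex} : adjB p q = true ↔ coxeterGraph.Adj p q := by
  rw [coxeterGraph, SimpleGraph.fromRel_adj]
  simp only [adjB, relB, Bool.and_eq_true, Bool.or_eq_true, beq_iff_eq,
    Bool.not_eq_true', beq_eq_false_iff_ne, ne_eq, coxeterRel, and_assoc, or_assoc]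

lemma memB_iff {g : Fin 7 → CoxeterVertex} {a : CoxeterVertex} :
    memB g a = true ↔ memIn g a := by
  simp [memB, memIn, List.any_eq_true, List.mem_finRange, beq_iff_eq]

lemma edgeB_iff {g : Fin 7 → CoxeterVertex} {a b : CoxeterVertex} :
    edgeB g a b = true ↔ edgeIn g a b := by
  simp [edgeB, edgeIn, List.any_eq_true, List.mem_finRange, beq_iff_eq,
    Bool.or_eq_true, Bool.and_eq_true]

lemma beqProp {a b : Bool} : (a == b) = true ↔ (a = true ↔ b = true) := by
  cases a <;> cases b <;> simp

lemma icondB_iff {t g : Fin 7 → CoxeterVertex} {u v w : CoxeterVertex} :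
    icondB t g u v w = true ↔ icond t g u v w := by
  rw [icondB, icond, Bool.and_eq_true, List.all_eq_true, List.all_eq_true]
  apply and_congr
  · constructor
    · intro h i
      have h2 := beqProp.mp (h i (List.mem_finRange i))
      rw [memB_iff] at h2
      simpa only [Bool.or_eq_true, beq_iff_eq, or_assoc] using h2
    · intro h i _
      apply beqProp.mpr
      rw [memB_iff]
      simpa only [Bool.or_eq_true, beq_iff_eq, or_assoc] using h i
  · constructor
    · intro h i
      have h2 := beqProp.mp (h i (List.mem_finRange i))
      rw [edgeB_iff] at h2
      simpa only [Bool.or_eq_true, Bool.and_eq_true, beq_iff_eq, or_assoc] using h2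
    · intro h i _
      apply beqProp.mpr
      rw [edgeB_iff]
      simpa only [Bool.or_eq_true, Bool.and_eq_true, beq_iff_eq, or_assoc] using h i

def eqCond (g g' : Fin 7 → CoxeterVertex) : Prop :=
  (∀ i : Fin 7, edgeIn g' (g i) (g (i+1))) ∧ (∀ i : Fin 7, edgeIn g (g' i) (g' (i+1)))

lemma eqCondB_iff {g g' : Fin 7 → CoxeterVertex} :
    eqCondB g g' = true ↔ eqCond g g' := by
  simp [eqCondB, eqCond, Bool.and_eq_true, List.all_eq_true, List.mem_finRange, edgeB_iff]

lemma okB_isCycleTuple {t : Fin 7 → CoxeterVertex} (h : okB t = true) : isCycleTuple t := by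
  simp only [okB, List.all_eq_true, List.mem_finRange, Bool.and_eq_true, Bool.or_eq_true,
    Bool.not_eq_true', beq_eq_false_iff_ne, beq_iff_eq, forall_true_left] at h
  refine ⟨fun i k hik => ?_, fun i => adjB_iff.mp (h i).2⟩
  rcases (h i).1 k with h1 | h1
  · exact absurd hik h1
  · exact h1

/- ### The 24 heptagons -/

def L24 : List (Fin 7 → CoxeterVertex) := [
  ![(0, 0), (0, 1), (0, 2), (0, 3), (0, 4), (0, 5), (0, 6)],
  ![(0, 0), (0, 1), (0, 2), (3, 2), (1, 2), (1, 0), (3, 0)],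
  ![(0, 0), (0, 1), (3, 1), (1, 1), (1, 6), (3, 6), (0, 6)],
  ![(0, 0), (0, 1), (3, 1), (2, 1), (2, 4), (2, 0), (3, 0)],
  ![(0, 0), (0, 6), (0, 5), (3, 5), (1, 5), (1, 0), (3, 0)],
  ![(0, 0), (0, 6), (3, 6), (2, 6), (2, 3), (2, 0), (3, 0)],
  ![(0, 1), (0, 2), (0, 3), (3, 3), (1, 3), (1, 1), (3, 1)],
  ![(0, 1), (0, 2), (3, 2), (2, 2), (2, 5), (2, 1), (3, 1)],
  ![(0, 2), (0, 3), (0, 4), (3, 4), (1, 4), (1, 2), (3, 2)],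
  ![(0, 2), (0, 3), (3, 3), (2, 3), (2, 6), (2, 2), (3, 2)],
  ![(0, 3), (0, 4), (0, 5), (3, 5), (1, 5), (1, 3), (3, 3)],
  ![(0, 3), (0, 4), (3, 4), (2, 4), (2, 0), (2, 3), (3, 3)],
  ![(0, 4), (0, 5), (0, 6), (3, 6), (1, 6), (1, 4), (3, 4)],
  ![(0, 4), (0, 5), (3, 5), (2, 5), (2, 1), (2, 4), (3, 4)],
  ![(0, 5), (0, 6), (3, 6), (2, 6), (2, 2), (2, 5), (3, 5)],
  ![(1, 0), (1, 2), (1, 4), (1, 6), (1, 1), (1, 3), (1, 5)],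
  ![(1, 0), (1, 2), (1, 4), (3, 4), (2, 4), (2, 0), (3, 0)],
  ![(1, 0), (1, 2), (3, 2), (2, 2), (2, 5), (3, 5), (1, 5)],
  ![(1, 0), (1, 5), (1, 3), (3, 3), (2, 3), (2, 0), (3, 0)],
  ![(1, 1), (1, 3), (1, 5), (3, 5), (2, 5), (2, 1), (3, 1)],
  ![(1, 1), (1, 3), (3, 3), (2, 3), (2, 6), (3, 6), (1, 6)],
  ![(1, 1), (1, 6), (1, 4), (3, 4), (2, 4), (2, 1), (3, 1)],
  ![(1, 2), (1, 4), (1, 6), (3, 6), (2, 6), (2, 2), (3, 2)],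
  ![(2, 0), (2, 3), (2, 6), (2, 2), (2, 5), (2, 1), (2, 4)]
]


def icheckB (t g : Fin 7 → CoxeterVertex) (j : Fin 7) : Bool :=
  icondB t g (t j) (t (j+1)) (t (j+1+1))

def dlemB : Bool :=
  L24.all fun t => (List.finRange 7).all fun j =>
    L24.any fun g => icheckB t g j &&
      (L24.all fun g' => !icheckB t g' j || eqCondB g' g)

def classifyB : Bool :=
  vertL.all fun v0 => vertL.all fun v1 => !adjB v0 v1 || (vertL.all fun v2 => !adjB v1 v2 || ((v2 == v0) || (vertL.all fun v3 => !adjB v2 v3 || ((v3 == v0) || ((v3 == v1) || (vertL.all fun v4 => !adjB v3 v4 || ((v4 == v0) || ((v4 == v1) || ((v4 == v2) || (vertL.all fun v5 => !adjB v4 v5 || ((v5 == v0) || ((v5 == v1) || ((v5 == v2) || ((v5 == v3) || (vertL.all fun v6 => !adjB v5 v6 || ((v6 == v0) || ((v6 == v1) || ((v6 == v2) || ((v6 == v3) || ((v6 == v4) || (!adjB v6 v0 || ((L24.any fun t => (List.finRange 7).any fun s =>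
      (tupEqB t s false v0 v1 v2 v3 v4 v5 v6 ||
       tupEqB t s true v0 v1 v2 v3 v4 v5 v6))))))))))))))))))))))))

set_option maxRecDepth 10000 in
set_option maxHeartbeats 12000000 in
lemma l24_all_ok : L24.all okB = true := by rfl

set_option maxRecDepth 10000 in
set_option maxHeartbeats 12000000 in
lemma dlemB_true : dlemB = true := by rfl

set_option maxRecDepth 10000 in
set_option maxHeartbeats 12000000 in
lemma classifyB_true : classifyB = true := by rfl

lemma mem_vertL : ∀ x : CoxeterVertex, x ∈ vertL := by
  rintro ⟨a, x⟩
  exact List.mem_flatMap.mpr ⟨a, List.mem_finRange a,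
    List.mem_map.mpr ⟨x, List.mem_finRange x, rfl⟩⟩

/- ### Invariance of `cycSG` under rotations and reflections -/

lemma edgeIn_swap {f : Fin 7 → CoxeterVertex} {a b : CoxeterVertex} (h : edgeIn f a b) :
    edgeIn f b a := by
  obtain ⟨i, h | h⟩ := h
  exacts [⟨i, Or.inr h⟩, ⟨i, Or.inl h⟩]

lemma edgeIn_T {t : Fin 7 → CoxeterVertex} {s : Fin 7} {r : Bool} {a b : CoxeterVertex} :
    edgeIn (T t s r) a b ↔ edgeIn t a b := by
  cases r
  · constructor
    · rintro ⟨i, ⟨ha, hb⟩ | ⟨ha, hb⟩⟩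
      · refine ⟨s + i, Or.inl ⟨ha, ?_⟩⟩
        rw [hb]; show t (s + (i+1)) = t (s + i + 1); exact congrArg t (by abel)
      · refine ⟨s + i, Or.inr ⟨ha, ?_⟩⟩
        rw [hb]; show t (s + (i+1)) = t (s + i + 1); exact congrArg t (by abel)
    · rintro ⟨j, ⟨ha, hb⟩ | ⟨ha, hb⟩⟩
      · refine ⟨j - s, Or.inl ⟨?_, ?_⟩⟩
        · rw [ha]; show t j = t (s + (j - s)); exact congrArg t (by abel)
        · rw [hb]; show t (j + 1) = t (s + (j - s + 1)); exact congrArg t (by abel)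
      · refine ⟨j - s, Or.inr ⟨?_, ?_⟩⟩
        · rw [ha]; show t j = t (s + (j - s)); exact congrArg t (by abel)
        · rw [hb]; show t (j + 1) = t (s + (j - s + 1)); exact congrArg t (by abel)
  · constructor
    · rintro ⟨i, ⟨ha, hb⟩ | ⟨ha, hb⟩⟩
      · refine ⟨s + -(i+1), Or.inr ⟨?_, ?_⟩⟩
        · rw [hb]; exact rfl
        · rw [ha]; show t (s + -i) = t (s + -(i+1) + 1); exact congrArg t (by abel)
      · refine ⟨s + -(i+1), Or.inl ⟨?_, ?_⟩⟩
        · rw [hb]; exact rfl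
        · rw [ha]; show t (s + -i) = t (s + -(i+1) + 1); exact congrArg t (by abel)
    · rintro ⟨j, ⟨ha, hb⟩ | ⟨ha, hb⟩⟩
      · refine ⟨s - (j+1), Or.inr ⟨?_, ?_⟩⟩
        · rw [hb]; show t (j+1) = t (s + -(s - (j+1))); exact congrArg t (by abel)
        · rw [ha]; show t j = t (s + -(s - (j+1) + 1)); exact congrArg t (by abel)
      · refine ⟨s - (j+1), Or.inl ⟨?_, ?_⟩⟩
        · rw [hb]; show t (j+1) = t (s + -(s - (j+1))); exact congrArg t (by abel)
        · rw [ha]; show t j = t (s + -(s - (j+1) + 1)); exact congrArg t (by abel)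

lemma range_T {t : Fin 7 → CoxeterVertex} {s : Fin 7} {r : Bool} :
    Set.range (T t s r) = Set.range t := by
  ext x; constructor
  · rintro ⟨i, rfl⟩; exact ⟨s + (if r then -i else i), rfl⟩
  · rintro ⟨j, rfl⟩
    cases r
    · exact ⟨j - s, by show t (s + (j - s)) = t j; exact congrArg t (by abel)⟩
    · exact ⟨s - j, by show t (s + -(s - j)) = t j; exact congrArg t (by abel)⟩

lemma cycSG_T (t : Fin 7 → CoxeterVertex) (s : Fin 7) (r : Bool) :
    cycSG (T t s r) = cycSG t :=
  SimpleGraph.Subgraph.ext range_T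
    (funext fun a => funext fun b =>
      propext (and_congr_right fun _ => edgeIn_T))

/- ### Seven-cycles are exactly the `cycSG`s of cycle tuples -/

lemma cycleGraph_adj_succ (i : Fin 7) : (SimpleGraph.cycleGraph 7).Adj i (i + 1) :=
  SimpleGraph.cycleGraph_adj.mpr (Or.inr (add_sub_cancel_left i 1))

lemma sevenCycle_tuple {H : coxeterGraph.Subgraph} (h : IsSevenCycle H) :
    ∃ f, isCycleTuple f ∧ H = cycSG f := by
  obtain ⟨e⟩ := h
  refine ⟨fun i => ((e.symm i : H.verts) : CoxeterVertex), ⟨?_, ?_⟩, ?_⟩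
  · intro i k hik
    exact e.symm.toEquiv.injective (Subtype.ext hik)
  · intro i
    have hcoe : H.coe.Adj (e.symm i) (e.symm (i+1)) :=
      e.symm.map_adj_iff.mpr (cycleGraph_adj_succ i)
    exact H.adj_sub hcoe
  · apply SimpleGraph.Subgraph.ext
    · ext x
      constructor
      · intro hx
        exact ⟨e ⟨x, hx⟩, congrArg Subtype.val (e.symm_apply_apply ⟨x, hx⟩)⟩
      · rintro ⟨i, rfl⟩
        exact (e.symm i).2
    · funext x y
      apply propext
      constructor
      · intro hadj
        have hx := H.edge_vert hadj
        have hy := H.edge_vert (H.symm.symm _ _ hadj)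
        refine ⟨H.adj_sub hadj, ?_⟩
        have hcoe : H.coe.Adj ⟨x, hx⟩ ⟨y, hy⟩ := hadj
        have hadj2 := e.map_adj_iff.mpr hcoe
        rw [SimpleGraph.cycleGraph_adj] at hadj2
        have hfx : ((e.symm (e ⟨x, hx⟩) : H.verts) : CoxeterVertex) = x :=
          congrArg Subtype.val (e.symm_apply_apply ⟨x, hx⟩)
        have hfy : ((e.symm (e ⟨y, hy⟩) : H.verts) : CoxeterVertex) = y :=
          congrArg Subtype.val (e.symm_apply_apply ⟨y, hy⟩)
        rcases hadj2 with h1 | h1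
        · have h2 : e ⟨x, hx⟩ = e ⟨y, hy⟩ + 1 := by
            rw [sub_eq_iff_eq_add.mp h1, add_comm]
          refine ⟨e ⟨y, hy⟩, Or.inr ⟨hfy.symm, ?_⟩⟩
          rw [← h2]
          exact hfx.symm
        · have h2 : e ⟨y, hy⟩ = e ⟨x, hx⟩ + 1 := by
            rw [sub_eq_iff_eq_add.mp h1, add_comm]
          refine ⟨e ⟨x, hx⟩, Or.inl ⟨hfx.symm, ?_⟩⟩
          rw [← h2]
          exact hfy.symm
      · rintro ⟨hG, i, ⟨ha, hb⟩ | ⟨ha, hb⟩⟩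
        · have : H.coe.Adj (e.symm i) (e.symm (i+1)) :=
            e.symm.map_adj_iff.mpr (cycleGraph_adj_succ i)
          rw [ha, hb]; exact this
        · have : H.coe.Adj (e.symm i) (e.symm (i+1)) :=
            e.symm.map_adj_iff.mpr (cycleGraph_adj_succ i)
          rw [ha, hb]; exact H.symm.symm _ _ this

lemma isSevenCycle_cycSG (f : Fin 7 → CoxeterVertex) (hf : isCycleTuple f) :
    IsSevenCycle (cycSG f) := by
  refine ⟨{ toEquiv := (Equiv.ofInjective f hf.1).symm, map_rel_iff' := ?_ }⟩
  intro a b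
  show (SimpleGraph.cycleGraph 7).Adj ((Equiv.ofInjective f hf.1).symm a)
      ((Equiv.ofInjective f hf.1).symm b) ↔ (cycSG f).coe.Adj a b
  obtain ⟨i, hi⟩ := a.2
  obtain ⟨k, hk⟩ := b.2
  have ha : a = Equiv.ofInjective f hf.1 i := Subtype.ext hi.symm
  have hb : b = Equiv.ofInjective f hf.1 k := Subtype.ext hk.symm
  subst ha hb
  simp only [Equiv.symm_apply_apply]
  rw [SimpleGraph.cycleGraph_adj]
  constructor
  · rintro (h1 | h1)
    · have h2 : i = k + 1 := by rw [sub_eq_iff_eq_add.mp h1, add_comm]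
      subst h2
      show (cycSG f).Adj (f (k+1)) (f k)
      exact ⟨(hf.2 k).symm, ⟨k, Or.inr ⟨rfl, rfl⟩⟩⟩
    · have h2 : k = i + 1 := by rw [sub_eq_iff_eq_add.mp h1, add_comm]
      subst h2
      show (cycSG f).Adj (f i) (f (i+1))
      exact ⟨hf.2 i, ⟨i, Or.inl ⟨rfl, rfl⟩⟩⟩
  · intro hadj
    have hadj2 : (cycSG f).Adj (f i) (f k) := hadj
    obtain ⟨-, idx, ⟨h1, h2⟩ | ⟨h1, h2⟩⟩ := hadj2
    · have hi2 : i = idx := hf.1 h1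
      have hk2 : k = idx + 1 := hf.1 h2
      right; rw [hi2, hk2]; exact add_sub_cancel_left idx 1
    · have hi2 : k = idx := hf.1 h1
      have hk2 : i = idx + 1 := hf.1 h2
      left; rw [hi2, hk2]; exact add_sub_cancel_left idx 1

/- ### Two-path subgraphs -/

lemma twoPath_adj {u v w : CoxeterVertex} (h1 : coxeterGraph.Adj u v)
    (h2 : coxeterGraph.Adj v w) {a b : CoxeterVertex} :
    (twoPathSubgraph h1 h2).Adj a b ↔
      ((a = u ∧ b = v) ∨ (a = v ∧ b = u) ∨ (a = v ∧ b = w) ∨ (a = w ∧ b = v)) := by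
  simp only [twoPathSubgraph, SimpleGraph.Subgraph.sup_adj, SimpleGraph.subgraphOfAdj_adj,
    Sym2.eq_iff]
  tauto

lemma twoPath_verts {u v w : CoxeterVertex} (h1 : coxeterGraph.Adj u v)
    (h2 : coxeterGraph.Adj v w) :
    (twoPathSubgraph h1 h2).verts = {u, v, w} := by
  ext x
  simp only [twoPathSubgraph, SimpleGraph.Subgraph.verts_sup, SimpleGraph.subgraphOfAdj_verts,
    Set.mem_union, Set.mem_insert_iff, Set.mem_singleton_iff]
  tauto

lemma twoPath_symm {u v w : CoxeterVertex} (h1 : coxeterGraph.Adj u v)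
    (h2 : coxeterGraph.Adj v w) :
    twoPathSubgraph h1 h2 = twoPathSubgraph h2.symm h1.symm := by
  apply SimpleGraph.Subgraph.ext
  · rw [twoPath_verts, twoPath_verts]
    ext x
    simp only [Set.mem_insert_iff, Set.mem_singleton_iff]
    tauto
  · funext a b
    apply propext
    rw [twoPath_adj, twoPath_adj]
    tauto

/- ### Locating a 2-path on a cycle tuple -/

lemma locate {t : Fin 7 → CoxeterVertex} (ht : Function.Injective t) {u v w : CoxeterVertex}
    (huw : u ≠ w) (h1 : edgeIn t u v) (h2 : edgeIn t v w) :
    ∃ j : Fin 7, (u = t j ∧ v = t (j+1) ∧ w = t (j+1+1)) ∨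
      (w = t j ∧ v = t (j+1) ∧ u = t (j+1+1)) := by
  obtain ⟨i, ⟨hu, hv⟩ | ⟨hv, hu⟩⟩ := h1 <;> obtain ⟨k, ⟨hv', hw⟩ | ⟨hw, hv'⟩⟩ := h2
  · have hik : i + 1 = k := ht (hv.symm.trans hv')
    refine ⟨i, Or.inl ⟨hu, hv, ?_⟩⟩
    rw [hik]; exact hw
  · have hik : i = k := add_right_cancel (ht (hv.symm.trans hv'))
    exfalso; apply huw
    rw [hu, hik, ← hw]
  · have hik : i = k := ht (hv.symm.trans hv')
    exfalso; apply huw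
    rw [hu, hik, ← hw]
  · have hik : k + 1 = i := ht (hv'.symm.trans hv)
    refine ⟨k, Or.inr ⟨hw, hv', ?_⟩⟩
    rw [hik]; exact hu

/- ### Subgraph equality from mutual edge containment -/

lemma memIn_of_edge {g : Fin 7 → CoxeterVertex} {a b : CoxeterVertex} (h : edgeIn g a b) :
    memIn g a ∧ memIn g b := by
  obtain ⟨i, ⟨ha, hb⟩ | ⟨hb, ha⟩⟩ := h
  exacts [⟨⟨i, ha⟩, ⟨i+1, hb⟩⟩, ⟨⟨i+1, ha⟩, ⟨i, hb⟩⟩]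

lemma eq_of_eqCond {g g' : Fin 7 → CoxeterVertex} (h : eqCond g g') : cycSG g = cycSG g' := by
  have edge : ∀ a b, edgeIn g a b → edgeIn g' a b := by
    intro a b hab
    obtain ⟨i, ⟨ha, hb⟩ | ⟨hb, ha⟩⟩ := hab
    · rw [ha, hb]; exact h.1 i
    · rw [ha, hb]; exact edgeIn_swap (h.1 i)
  have edge' : ∀ a b, edgeIn g' a b → edgeIn g a b := by
    intro a b hab
    obtain ⟨i, ⟨ha, hb⟩ | ⟨hb, ha⟩⟩ := hab
    · rw [ha, hb]; exact h.2 i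
    · rw [ha, hb]; exact edgeIn_swap (h.2 i)
  apply SimpleGraph.Subgraph.ext
  · ext x
    constructor
    · rintro ⟨i, rfl⟩
      obtain ⟨k, hk⟩ := (memIn_of_edge (edge _ _ ⟨i, Or.inl ⟨rfl, rfl⟩⟩)).1
      exact ⟨k, hk.symm⟩
    · rintro ⟨i, rfl⟩
      obtain ⟨k, hk⟩ := (memIn_of_edge (edge' _ _ ⟨i, Or.inl ⟨rfl, rfl⟩⟩)).1
      exact ⟨k, hk.symm⟩
  · funext a b
    exact propext (and_congr_right fun _ => ⟨edge a b, edge' a b⟩)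

/- ### The intersection condition -/

lemma inter_eq {t g : Fin 7 → CoxeterVertex} (ht : isCycleTuple t) (j : Fin 7)
    (h1 : coxeterGraph.Adj (t j) (t (j+1))) (h2 : coxeterGraph.Adj (t (j+1)) (t (j+1+1)))
    (hic : icond t g (t j) (t (j+1)) (t (j+1+1))) :
    cycSG t ⊓ cycSG g = twoPathSubgraph h1 h2 := by
  apply SimpleGraph.Subgraph.ext
  · rw [SimpleGraph.Subgraph.verts_inf, twoPath_verts]
    ext x
    simp only [cycSG_verts, Set.mem_inter_iff, Set.mem_range, Set.mem_insert_iff,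
      Set.mem_singleton_iff]
    constructor
    · rintro ⟨⟨i, rfl⟩, ⟨k, hk⟩⟩
      exact (hic.1 i).mp ⟨k, hk.symm⟩
    · rintro (h | h | h)
      · obtain ⟨k, hk⟩ := (hic.1 j).mpr (Or.inl rfl)
        exact ⟨⟨j, h.symm⟩, ⟨k, by rw [← hk, ← h]⟩⟩
      · obtain ⟨k, hk⟩ := (hic.1 (j+1)).mpr (Or.inr (Or.inl rfl))
        exact ⟨⟨j+1, h.symm⟩, ⟨k, by rw [← hk, ← h]⟩⟩
      · obtain ⟨k, hk⟩ := (hic.1 (j+1+1)).mpr (Or.inr (Or.inr rfl))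
        exact ⟨⟨j+1+1, h.symm⟩, ⟨k, by rw [← hk, ← h]⟩⟩
  · funext a b
    apply propext
    rw [show ((cycSG t ⊓ cycSG g).Adj a b ↔ (cycSG t).Adj a b ∧ (cycSG g).Adj a b) from
      SimpleGraph.Subgraph.inf_adj, twoPath_adj]
    constructor
    · rintro ⟨⟨hG, i, ⟨ha, hb⟩ | ⟨hb, ha⟩⟩, ⟨hG', hedge⟩⟩
      · subst ha; subst hb
        exact (hic.2 i).mp hedge
      · subst ha; subst hb
        have h4 := (hic.2 i).mp (edgeIn_swap hedge)
        tauto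
    · rintro (⟨ha, hb⟩ | ⟨ha, hb⟩ | ⟨ha, hb⟩ | ⟨ha, hb⟩)
      · subst ha; subst hb
        exact ⟨⟨ht.2 j, ⟨j, Or.inl ⟨rfl, rfl⟩⟩⟩,
          ⟨ht.2 j, (hic.2 j).mpr (Or.inl ⟨rfl, rfl⟩)⟩⟩
      · subst ha; subst hb
        exact ⟨⟨(ht.2 j).symm, ⟨j, Or.inr ⟨rfl, rfl⟩⟩⟩,
          ⟨(ht.2 j).symm, edgeIn_swap ((hic.2 j).mpr (Or.inl ⟨rfl, rfl⟩))⟩⟩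
      · subst ha; subst hb
        exact ⟨⟨ht.2 (j+1), ⟨j+1, Or.inl ⟨rfl, rfl⟩⟩⟩,
          ⟨ht.2 (j+1), (hic.2 (j+1)).mpr (Or.inr (Or.inr (Or.inl ⟨rfl, rfl⟩)))⟩⟩
      · subst ha; subst hb
        exact ⟨⟨(ht.2 (j+1)).symm, ⟨j+1, Or.inr ⟨rfl, rfl⟩⟩⟩,
          ⟨(ht.2 (j+1)).symm,
            edgeIn_swap ((hic.2 (j+1)).mpr (Or.inr (Or.inr (Or.inl ⟨rfl, rfl⟩))))⟩⟩

lemma inter_icond {t g : Fin 7 → CoxeterVertex} (ht : isCycleTuple t) (j : Fin 7)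
    (h1 : coxeterGraph.Adj (t j) (t (j+1))) (h2 : coxeterGraph.Adj (t (j+1)) (t (j+1+1)))
    (hEq : cycSG t ⊓ cycSG g = twoPathSubgraph h1 h2) :
    icond t g (t j) (t (j+1)) (t (j+1+1)) := by
  have hverts := congrArg SimpleGraph.Subgraph.verts hEq
  rw [SimpleGraph.Subgraph.verts_inf, twoPath_verts] at hverts
  have hAdj : ∀ a b : CoxeterVertex,
      ((cycSG t).Adj a b ∧ (cycSG g).Adj a b) ↔ (twoPathSubgraph h1 h2).Adj a b := by
    intro a b
    rw [← hEq]
    exact (SimpleGraph.Subgraph.inf_adj).symm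
  constructor
  · intro i
    constructor
    · rintro ⟨k, hk⟩
      have hx : t i ∈ ({t j, t (j+1), t (j+1+1)} : Set CoxeterVertex) := by
        rw [← hverts]
        exact ⟨⟨i, rfl⟩, ⟨k, hk.symm⟩⟩
      simpa using hx
    · intro hm
      have hx : t i ∈ ((cycSG t).verts ∩ (cycSG g).verts) := by
        rw [show (cycSG t).verts ∩ (cycSG g).verts =
          ({t j, t (j+1), t (j+1+1)} : Set CoxeterVertex) from hverts]
        simpa using hm
      obtain ⟨-, k, hk⟩ := hx
      exact ⟨k, hk.symm⟩
  · intro i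
    constructor
    · intro he
      have h3 := (hAdj _ _).mp ⟨⟨ht.2 i, ⟨i, Or.inl ⟨rfl, rfl⟩⟩⟩, ⟨ht.2 i, he⟩⟩
      rw [twoPath_adj] at h3
      exact h3
    · intro he
      have h3 := (hAdj _ _).mpr ((twoPath_adj h1 h2).mpr he)
      exact h3.2.2

/- ### Classification of seven-cycles -/

lemma bor_elim_not {A B : Bool} (h : (!A || B) = true) (hA : A = true) : B = true := by
  subst hA; simpa using h

lemma bor_elim_beq {x y : CoxeterVertex} {B : Bool} (h : ((x == y) || B) = true)
    (hxy : x ≠ y) : B = true := by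
  rw [beq_eq_false_iff_ne.mpr hxy] at h
  simpa using h

lemma l24_cyc : ∀ t ∈ L24, isCycleTuple t := fun t ht =>
  okB_isCycleTuple (List.all_eq_true.mp l24_all_ok t ht)

lemma tuple_in_L24 {f : Fin 7 → CoxeterVertex} (hf : isCycleTuple f) :
    ∃ t ∈ L24, cycSG f = cycSG t := by
  have hne : ∀ i k : Fin 7, i ≠ k → f i ≠ f k := fun i k hik h => hik (hf.1 h)
  have hadjB : ∀ i : Fin 7, adjB (f i) (f (i+1)) = true := fun i => adjB_iff.mpr (hf.2 i)
  have h := classifyB_true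
  unfold classifyB at h
  replace h := List.all_eq_true.mp h (f 0) (mem_vertL _)
  replace h := List.all_eq_true.mp h (f (0+1)) (mem_vertL _)
  replace h := bor_elim_not h (hadjB 0)
  replace h := List.all_eq_true.mp h (f (0+1+1)) (mem_vertL _)
  replace h := bor_elim_not h (hadjB (0+1))
  replace h := bor_elim_beq h (hne _ _ (by decide))
  replace h := List.all_eq_true.mp h (f (0+1+1+1)) (mem_vertL _)
  replace h := bor_elim_not h (hadjB (0+1+1))
  replace h := bor_elim_beq h (hne _ _ (by decide))
  replace h := bor_elim_beq h (hne _ _ (by decide))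
  replace h := List.all_eq_true.mp h (f (0+1+1+1+1)) (mem_vertL _)
  replace h := bor_elim_not h (hadjB (0+1+1+1))
  replace h := bor_elim_beq h (hne _ _ (by decide))
  replace h := bor_elim_beq h (hne _ _ (by decide))
  replace h := bor_elim_beq h (hne _ _ (by decide))
  replace h := List.all_eq_true.mp h (f (0+1+1+1+1+1)) (mem_vertL _)
  replace h := bor_elim_not h (hadjB (0+1+1+1+1))
  replace h := bor_elim_beq h (hne _ _ (by decide))
  replace h := bor_elim_beq h (hne _ _ (by decide))
  replace h := bor_elim_beq h (hne _ _ (by decide))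
  replace h := bor_elim_beq h (hne _ _ (by decide))
  replace h := List.all_eq_true.mp h (f (0+1+1+1+1+1+1)) (mem_vertL _)
  replace h := bor_elim_not h (hadjB (0+1+1+1+1+1))
  replace h := bor_elim_beq h (hne _ _ (by decide))
  replace h := bor_elim_beq h (hne _ _ (by decide))
  replace h := bor_elim_beq h (hne _ _ (by decide))
  replace h := bor_elim_beq h (hne _ _ (by decide))
  replace h := bor_elim_beq h (hne _ _ (by decide))
  replace h := bor_elim_not h (by
    have := hadjB (0+1+1+1+1+1+1)
    have he : ((0:Fin 7)+1+1+1+1+1+1)+1 = 0 := by decide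
    rw [he] at this
    exact this)
  obtain ⟨t, htL, h2⟩ := List.any_eq_true.mp h
  obtain ⟨sft, -, h3⟩ := List.any_eq_true.mp h2
  have key : ∀ r : Bool,
      tupEqB t sft r (f 0) (f (0+1)) (f (0+1+1)) (f (0+1+1+1)) (f (0+1+1+1+1))
        (f (0+1+1+1+1+1)) (f (0+1+1+1+1+1+1)) = true →
      cycSG f = cycSG t := by
    intro r htup
    simp only [tupEqB, Bool.and_eq_true, beq_iff_eq] at htup
    obtain ⟨⟨⟨⟨⟨⟨h0, hh1⟩, hh2⟩, hh3⟩, hh4⟩, hh5⟩, hh6⟩ := htup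
    have hfT : f = T t sft r := by
      funext i
      fin_cases i
      exacts [h0, hh1, hh2, hh3, hh4, hh5, hh6]
    rw [hfT, cycSG_T]
  have h4 : (tupEqB t sft false (f 0) (f (0+1)) (f (0+1+1)) (f (0+1+1+1)) (f (0+1+1+1+1))
        (f (0+1+1+1+1+1)) (f (0+1+1+1+1+1+1)) = true) ∨
      (tupEqB t sft true (f 0) (f (0+1)) (f (0+1+1)) (f (0+1+1+1)) (f (0+1+1+1+1))
        (f (0+1+1+1+1+1)) (f (0+1+1+1+1+1+1)) = true) := by
    simpa using h3
  rcases h4 with h4 | h4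
  · exact ⟨t, htL, key false h4⟩
  · exact ⟨t, htL, key true h4⟩

lemma sevenCycle_canon {H : coxeterGraph.Subgraph} (h : IsSevenCycle H) :
    ∃ t ∈ L24, H = cycSG t := by
  obtain ⟨f, hf, rfl⟩ := sevenCycle_tuple h
  exact tuple_in_L24 hf

/- ### The uniqueness search -/

lemma dlem : ∀ t ∈ L24, ∀ j : Fin 7,
    ∃ g ∈ L24, icond t g (t j) (t (j+1)) (t (j+1+1)) ∧
      ∀ g' ∈ L24, icond t g' (t j) (t (j+1)) (t (j+1+1)) → eqCond g' g := by
  intro t ht j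
  have h := dlemB_true
  unfold dlemB at h
  have h1 := List.all_eq_true.mp (List.all_eq_true.mp h t ht) j (List.mem_finRange j)
  obtain ⟨g, hgL, hg⟩ := List.any_eq_true.mp h1
  rw [Bool.and_eq_true] at hg
  refine ⟨g, hgL, icondB_iff.mp hg.1, ?_⟩
  intro g' hg'L hic'
  have h2 := List.all_eq_true.mp hg.2 g' hg'L
  exact eqCondB_iff.mp (bor_elim_not h2 (icondB_iff.mpr hic'))

lemma core (t : Fin 7 → CoxeterVertex) (htL : t ∈ L24) (j : Fin 7)
    (h1 : coxeterGraph.Adj (t j) (t (j+1))) (h2 : coxeterGraph.Adj (t (j+1)) (t (j+1+1))) :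
    ∃! C₁ : coxeterGraph.Subgraph, IsSevenCycle C₁ ∧ C₁ ≠ cycSG t ∧
      cycSG t ⊓ C₁ = twoPathSubgraph h1 h2 := by
  have ht := l24_cyc t htL
  obtain ⟨g, hgL, hic, huniq⟩ := dlem t htL j
  have hg := l24_cyc g hgL
  have hint : cycSG t ⊓ cycSG g = twoPathSubgraph h1 h2 := inter_eq ht j h1 h2 hic
  have hne : cycSG g ≠ cycSG t := by
    intro heq
    rw [heq, inf_idem] at hint
    have hv := congrArg SimpleGraph.Subgraph.verts hint
    rw [twoPath_verts, cycSG_verts] at hv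
    have hmem : t (j+1+1+1) ∈ ({t j, t (j+1), t (j+1+1)} : Set CoxeterVertex) := by
      rw [← hv]; exact ⟨j+1+1+1, rfl⟩
    have hfacts : ∀ i : Fin 7, i+1+1+1 ≠ i ∧ i+1+1+1 ≠ i+1 ∧ i+1+1+1 ≠ i+1+1 := by decide
    simp only [Set.mem_insert_iff, Set.mem_singleton_iff] at hmem
    rcases hmem with h | h | h
    · exact (hfacts j).1 (ht.1 h)
    · exact (hfacts j).2.1 (ht.1 h)
    · exact (hfacts j).2.2 (ht.1 h)
  refine ⟨cycSG g, ⟨isSevenCycle_cycSG g hg, hne, hint⟩, ?_⟩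
  rintro C₁ ⟨h7, -, hintC⟩
  obtain ⟨g', hg'L, rfl⟩ := sevenCycle_canon h7
  exact eq_of_eqCond (huniq g' hg'L (inter_icond ht j h1 h2 hintC))

/- ### The main theorem -/

theorem coxeterGraph_tightly_fastened_sevenCycles_over_twoPaths
    (C₀ : coxeterGraph.Subgraph) (hC₀ : IsSevenCycle C₀)
    (u v w : CoxeterVertex) (huw : u ≠ w)
    (h₁ : C₀.Adj u v) (h₂ : C₀.Adj v w) :
    ∃! C₁ : coxeterGraph.Subgraph, IsSevenCycle C₁ ∧ C₁ ≠ C₀ ∧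
      C₀ ⊓ C₁ = twoPathSubgraph (C₀.adj_sub h₁) (C₀.adj_sub h₂) := by
  obtain ⟨t, htL, hC⟩ := sevenCycle_canon hC₀
  subst hC
  have ht := l24_cyc t htL
  obtain ⟨j, hj⟩ := locate ht.1 huw (cycSG_adj.mp h₁).2 (cycSG_adj.mp h₂).2
  rcases hj with ⟨hu, hv, hw⟩ | ⟨hw, hv, hu⟩
  · subst hu; subst hv; subst hw
    exact core t htL j ((cycSG t).adj_sub h₁) ((cycSG t).adj_sub h₂)
  · subst hu; subst hv; subst hw
    have e : twoPathSubgraph ((cycSG t).adj_sub h₁) ((cycSG t).adj_sub h₂) =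
        twoPathSubgraph ((cycSG t).adj_sub h₂).symm ((cycSG t).adj_sub h₁).symm :=
      twoPath_symm _ _
    rw [e]
    exact core t htL j ((cycSG t).adj_sub h₂).symm ((cycSG t).adj_sub h₁).symm
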